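/- Let Y be a measurable space, let k : Y × Y → ℝ be a bounded, measurable, symmetric kernel, and let μ, ν, η be probability measures on Y. Define the functional J(ρ) = (1/2) ∬ k(y,y') dρ(y) dρ(y') − ∬ k(y,y') dρ(y) dν(y') and the function g(y) = ∫ k(y,y') dμ(y') − ∫ k(y,y') dν(y'). Then the function f(ε) = J((1−ε)μ + εη), defined for ε ∈ [0,1], has right derivative at ε = 0 equal to ∫ g dη − ∫ g dμ; that is, f has derivative ∫ g dη − ∫ g dμ at 0 within [0,1]. -/

import Mathlib

open MeasureTheory

section Aux

variable {Y : Type*} [MeasurableSpace Y] {k : Y → Y → ℝ} {M : ℝ}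

private lemma aux_sec_int (hk_meas : Measurable fun p : Y × Y => k p.1 p.2)
    (hM : ∀ y y', |k y y'| ≤ M) (ρ : Measure Y) [IsFiniteMeasure ρ] (y : Y) :
    Integrable (fun y' => k y y') ρ :=
  (integrable_const M).mono'
    ((hk_meas.comp measurable_prodMk_left).aestronglyMeasurable)
    (Filter.Eventually.of_forall fun y' => by simpa using hM y y')

private lemma aux_unc_int (hk_meas : Measurable fun p : Y × Y => k p.1 p.2)
    (hM : ∀ y y', |k y y'| ≤ M) (ρ σ : Measure Y)
    [IsFiniteMeasure ρ] [IsFiniteMeasure σ] [SFinite ρ] [SFinite σ] :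
    Integrable (Function.uncurry k) (ρ.prod σ) :=
  (integrable_const M).mono' hk_meas.aestronglyMeasurable
    (Filter.Eventually.of_forall fun p => by simpa [Function.uncurry] using hM p.1 p.2)

private lemma aux_I_int (hk_meas : Measurable fun p : Y × Y => k p.1 p.2)
    (hM : ∀ y y', |k y y'| ≤ M) (σ ρ : Measure Y)
    [IsProbabilityMeasure σ] [IsFiniteMeasure ρ] :
    Integrable (fun y => ∫ y', k y y' ∂σ) ρ := by
  have hmeas : StronglyMeasurable fun y => ∫ y', k y y' ∂σ :=
    (hk_meas.stronglyMeasurable).integral_prod_right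
  refine (integrable_const M).mono' hmeas.aestronglyMeasurable
    (Filter.Eventually.of_forall fun y => ?_)
  calc ‖∫ y', k y y' ∂σ‖ ≤ ∫ y', ‖k y y'‖ ∂σ := norm_integral_le_integral_norm _
    _ ≤ ∫ _, M ∂σ := by
        refine integral_mono_of_nonneg (Filter.Eventually.of_forall fun _ => norm_nonneg _)
          (integrable_const M) (Filter.Eventually.of_forall fun y' => ?_)
        simpa using hM y y'
    _ = M := by simp

private lemma aux_swap (hk_meas : Measurable fun p : Y × Y => k p.1 p.2)
    (hM : ∀ y y', |k y y'| ≤ M) (hk_symm : ∀ y y', k y y' = k y' y)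
    (ρ σ : Measure Y) [IsProbabilityMeasure ρ] [IsProbabilityMeasure σ] :
    ∫ y, ∫ y', k y y' ∂σ ∂ρ = ∫ y, ∫ y', k y y' ∂ρ ∂σ := by
  rw [integral_integral_swap (aux_unc_int hk_meas hM ρ σ)]
  exact integral_congr_ae (Filter.Eventually.of_forall fun y =>
    integral_congr_ae (Filter.Eventually.of_forall fun y' => hk_symm y' y))

end Aux

/-- First variation of the MMD-type functional
`J(ρ) = (1/2)∬ k dρ dρ − ∬ k(y,y') dρ(y) dν(y')` at `μ` in the direction of the mixture
with `η`: the map `ε ↦ J((1−ε)μ + εη)` has right derivative `∫ g dη − ∫ g dμ` at `0`,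
where `g(y) = ∫ k(y,y') ∂μ(y') − ∫ k(y,y') ∂ν(y')`. -/
theorem stmt_8 {Y : Type*} [MeasurableSpace Y]
    (k : Y → Y → ℝ) (hk_meas : Measurable fun p : Y × Y => k p.1 p.2)
    (hk_bdd : ∃ M : ℝ, ∀ y y', |k y y'| ≤ M)
    (hk_symm : ∀ y y', k y y' = k y' y)
    (μ ν η : Measure Y)
    [IsProbabilityMeasure μ] [IsProbabilityMeasure ν] [IsProbabilityMeasure η]
    (mix : ℝ → Measure Y)
    (hmix : ∀ ε : ℝ, mix ε = ENNReal.ofReal (1 - ε) • μ + ENNReal.ofReal ε • η)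
    (f : ℝ → ℝ)
    (hf : ∀ ε : ℝ, f ε = (1 / 2) * (∫ y, ∫ y', k y y' ∂(mix ε) ∂(mix ε))
      - ∫ y, ∫ y', k y y' ∂ν ∂(mix ε))
    (g : Y → ℝ)
    (hg : ∀ y, g y = (∫ y', k y y' ∂μ) - ∫ y', k y y' ∂ν) :
    HasDerivWithinAt f ((∫ y, g y ∂η) - ∫ y, g y ∂μ) (Set.Icc (0 : ℝ) 1) 0 := by
  obtain ⟨M, hM⟩ := hk_bdd
  -- abbreviations
  set A := ∫ y, ∫ y', k y y' ∂μ ∂μ with hA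
  set B := ∫ y, ∫ y', k y y' ∂μ ∂η with hB
  set C := ∫ y, ∫ y', k y y' ∂η ∂η with hC
  set D := ∫ y, ∫ y', k y y' ∂ν ∂μ with hD
  set E := ∫ y, ∫ y', k y y' ∂ν ∂η with hE
  -- splitting integrals over the mixture
  have hsplit : ∀ (h : Y → ℝ), Integrable h μ → Integrable h η → ∀ ε ∈ Set.Icc (0:ℝ) 1,
      ∫ y, h y ∂(mix ε) = (1 - ε) * ∫ y, h y ∂μ + ε * ∫ y, h y ∂η := by
    intro h hμi hηi ε hε
    rw [hmix ε, integral_add_measure (hμi.smul_measure ENNReal.ofReal_ne_top)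
      (hηi.smul_measure ENNReal.ofReal_ne_top), integral_smul_measure, integral_smul_measure,
      ENNReal.toReal_ofReal (by linarith [hε.2]), ENNReal.toReal_ofReal hε.1]
    simp [smul_eq_mul]
  -- f equals an explicit quadratic on [0,1]
  have hfq : ∀ ε ∈ Set.Icc (0:ℝ) 1,
      f ε = ((1:ℝ)/2 * (A - 2*B + C)) * ε^2
        + ((B - A) + (D - E)) * ε + ((1:ℝ)/2 * A - D) := by
    intro ε hε
    have hBswap : ∫ y, ∫ y', k y y' ∂η ∂μ = B := by
      rw [hB]; exact aux_swap hk_meas hM hk_symm μ η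
    have hinner : ∀ y, ∫ y', k y y' ∂(mix ε)
        = (1 - ε) * ∫ y', k y y' ∂μ + ε * ∫ y', k y y' ∂η := fun y =>
      hsplit _ (aux_sec_int hk_meas hM μ y) (aux_sec_int hk_meas hM η y) ε hε
    have hIμμ := aux_I_int hk_meas hM μ μ
    have hIμη := aux_I_int hk_meas hM μ η
    have hIημ := aux_I_int hk_meas hM η μ
    have hIηη := aux_I_int hk_meas hM η η
    have hIνμ := aux_I_int hk_meas hM ν μ
    have hIνη := aux_I_int hk_meas hM ν η
    have houter : ∫ y, ∫ y', k y y' ∂(mix ε) ∂(mix ε)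
        = (1 - ε) * ((1 - ε) * A + ε * B) + ε * ((1 - ε) * B + ε * C) := by
      have h1 : ∫ y, ∫ y', k y y' ∂(mix ε) ∂(mix ε)
          = ∫ y, ((1 - ε) * ∫ y', k y y' ∂μ + ε * ∫ y', k y y' ∂η) ∂(mix ε) := by
        exact integral_congr_ae (Filter.Eventually.of_forall fun y => hinner y)
      have h2 := hsplit (fun y => (1 - ε) * (∫ y', k y y' ∂μ) + ε * ∫ y', k y y' ∂η)
        (by exact (hIμμ.const_mul _).add (hIημ.const_mul _))
        (by exact (hIμη.const_mul _).add (hIηη.const_mul _)) ε hε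
      rw [h1, h2,
        integral_add (hIμμ.const_mul _) (hIημ.const_mul _),
        integral_add (hIμη.const_mul _) (hIηη.const_mul _),
        integral_const_mul, integral_const_mul, integral_const_mul, integral_const_mul,
        hBswap]
    have hν : ∫ y, ∫ y', k y y' ∂ν ∂(mix ε) = (1 - ε) * D + ε * E :=
      hsplit _ hIνμ hIνη ε hε
    rw [hf ε, houter, hν]
    ring
  -- the quadratic has the right derivative at 0
  have hq : HasDerivWithinAt (fun ε : ℝ =>
      ((1:ℝ)/2 * (A - 2*B + C)) * ε^2 + ((B - A) + (D - E)) * ε + ((1:ℝ)/2 * A - D))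
      ((B - A) + (D - E)) (Set.Icc (0:ℝ) 1) 0 := by
    have : HasDerivAt (fun ε : ℝ =>
        ((1:ℝ)/2 * (A - 2*B + C)) * ε^2 + ((B - A) + (D - E)) * ε + ((1:ℝ)/2 * A - D))
        ((B - A) + (D - E)) 0 := by
      have h3 := (((hasDerivAt_pow 2 (0:ℝ)).const_mul ((1:ℝ)/2 * (A - 2*B + C))).add
        ((hasDerivAt_id' (x := (0:ℝ))).const_mul ((B - A) + (D - E)))).add_const
        ((1:ℝ)/2 * A - D)
      simpa using h3
    exact this.hasDerivWithinAt
  -- identify the stated derivative value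
  have hgη : ∫ y, g y ∂η = B - E := by
    rw [show (fun y => g y) = fun y => (∫ y', k y y' ∂μ) - ∫ y', k y y' ∂ν from
      funext hg, integral_sub (aux_I_int hk_meas hM μ η) (aux_I_int hk_meas hM ν η)]
  have hgμ : ∫ y, g y ∂μ = A - D := by
    rw [show (fun y => g y) = fun y => (∫ y', k y y' ∂μ) - ∫ y', k y y' ∂ν from
      funext hg, integral_sub (aux_I_int hk_meas hM μ μ) (aux_I_int hk_meas hM ν μ)]
  have hval : (∫ y, g y ∂η) - ∫ y, g y ∂μ = (B - A) + (D - E) := by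
    rw [hgη, hgμ]; ring
  rw [hval]
  exact hq.congr hfq (hfq 0 (by norm_num))
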